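/- In an acyclic b-matching preference instance, starting from any configuration, every maximal sequence of active initiatives (i.e., one ending at a configuration that admits no blocking pair) is finite and terminates at the unique stable configuration of the instance. -/

import Mathlib

/-!
A formalization of b-matching preference instances (peers, acceptance graph,
quotas, preference lists given by ranks), configurations, blocking pairs,
stability, active initiatives, loving pairs, and acyclicity.
-/

open Finset

/-- A b-matching preference instance on a finite set `P` of peers:
an acceptance graph `G`, quotas `b`, and for each peer `p` a rank function
(`rank p q` is the position of `q` in `p`'s preference list, smaller is better),
injective on the neighbors of `p` (strict preferences). -/
structure PrefInstance (P : Type*) [Fintype P] [DecidableEq P] where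
  G : SimpleGraph P
  b : P → ℕ
  rank : P → P → ℕ
  rank_injOn : ∀ p : P, Set.InjOn (rank p) {q | G.Adj p q}

namespace PrefInstance

variable {P : Type*} [Fintype P] [DecidableEq P] (I : PrefInstance P)

/-- `p` prefers `q` to `r` (both neighbors of `p`, `q` ranked better). -/
def Prefers (p q r : P) : Prop :=
  I.G.Adj p q ∧ I.G.Adj p r ∧ I.rank p q < I.rank p r

/-- The instance is acyclic: there is no preference cycle, i.e. no `k ≥ 3`
distinct peers `p_1, …, p_k` (indices modulo `k`) such that each `p_i`
prefers `p_{i+1}` to `p_{i-1}`. -/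
def Acyclic : Prop :=
  ¬ ∃ (k : ℕ) (f : ZMod k → P), 3 ≤ k ∧ Function.Injective f ∧
      ∀ i : ZMod k, I.Prefers (f i) (f (i + 1)) (f (i - 1))

/-- The mates of `p` in a set `C` of edges. -/
def mates (C : Finset (Sym2 P)) (p : P) : Finset P :=
  Finset.univ.filter fun q => s(p, q) ∈ C

/-- `C` is a configuration: a set of edges of the acceptance graph in which every
peer `p` has at most `b p` mates. -/
def IsConfig (C : Finset (Sym2 P)) : Prop :=
  (∀ e ∈ C, e ∈ I.G.edgeSet) ∧ ∀ p : P, (mates C p).card ≤ I.b p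

/-- `p` is under-mated in `C`: it has fewer than `b p` mates. -/
def UnderMated (C : Finset (Sym2 P)) (p : P) : Prop :=
  (mates C p).card < I.b p

/-- `p` is willing to pair with `q`: it is under-mated, or it prefers `q`
to its worst mate in `C`. -/
def Willing (C : Finset (Sym2 P)) (p q : P) : Prop :=
  I.UnderMated C p ∨ ∃ w ∈ mates C p, I.rank p q < I.rank p w

/-- `{p, q}` is a blocking pair for `C`: an edge of the acceptance graph not in
`C` such that each endpoint is under-mated or prefers the other to its worst mate. -/
def BlockingPair (C : Finset (Sym2 P)) (p q : P) : Prop :=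
  I.G.Adj p q ∧ s(p, q) ∉ C ∧ I.Willing C p q ∧ I.Willing C q p

/-- A configuration is stable if it admits no blocking pair. -/
def IsStable (C : Finset (Sym2 P)) : Prop :=
  I.IsConfig C ∧ ∀ p q : P, ¬ I.BlockingPair C p q

/-- The edges to be dropped at `p` when `p` gets a new mate: none if `p` is
under-mated, otherwise the edge joining `p` to its worst mate in `C`. -/
def dropEdges (C : Finset (Sym2 P)) (p : P) : Finset (Sym2 P) :=
  if (mates C p).card < I.b p then ∅
  else ((mates C p).filter fun w => ∀ r ∈ mates C p, I.rank p r ≤ I.rank p w).image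
      fun w => s(p, w)

/-- The configuration produced by resolving the blocking pair `{p, q}` of `C`:
add the edge `{p, q}` and, for each of `p` and `q` already at full quota,
remove the edge joining it to its worst mate. -/
def resolve (C : Finset (Sym2 P)) (p q : P) : Finset (Sym2 P) :=
  insert s(p, q) (C \ (I.dropEdges C p ∪ I.dropEdges C q))

/-- `C'` is obtained from `C` by an active initiative. -/
def ActiveStep (C C' : Finset (Sym2 P)) : Prop :=
  ∃ p q : P, I.BlockingPair C p q ∧ C' = I.resolve C p q

/-- `{p, q}` is a loving pair: an edge of the acceptance graph whose endpoints
rank each other first. -/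
def LovingPair (p q : P) : Prop :=
  I.G.Adj p q ∧ (∀ r : P, I.G.Adj p r → I.rank p q ≤ I.rank p r) ∧
    ∀ r : P, I.G.Adj q r → I.rank q p ≤ I.rank q r

open scoped Classical in
/-- The best-mate initiative of peer `p` at configuration `C`: resolve the
blocking pair `{p, q}` where `q` is the peer `p` prefers most among all peers
forming a blocking pair with `p`; if `p` belongs to no blocking pair, `C` is
left unchanged. -/
noncomputable def bestMateInit (C : Finset (Sym2 P)) (p : P) : Finset (Sym2 P) :=
  if h : ∃ q : P, I.BlockingPair C p q ∧
      ∀ r : P, I.BlockingPair C p r → I.rank p q ≤ I.rank p r then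
    I.resolve C p h.choose
  else C

end PrefInstance

variable {P : Type*} [Fintype P] [DecidableEq P]

open PrefInstance


namespace PrefInstance

variable {P : Type*} [Fintype P] [DecidableEq P] (I : PrefInstance P)

private lemma periodic_mod {α : Type*} (g : ℕ → α) (m : ℕ)
    (hper : ∀ i, g (i + m) = g i) : ∀ x, g (x % m) = g x := by
  intro x
  induction x using Nat.strong_induction_on with
  | _ x ih =>
    rcases Nat.lt_or_ge x m with h | h
    · rw [Nat.mod_eq_of_lt h]
    · rcases Nat.eq_zero_or_pos m with rfl | hm
      · simp
      · have h1 : x = (x - m) + m := by omega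
        rw [h1, Nat.add_mod_right, hper]
        exact ih (x - m) (by omega)

lemma no_closed_walk (hI : I.Acyclic) :
    ∀ m : ℕ, ∀ g : ℕ → P, 1 ≤ m → (∀ i, g (i + m) = g i) →
    (∀ i, I.G.Adj (g (i + 1)) (g i)) →
    (∀ i, I.rank (g (i + 1)) (g (i + 2)) < I.rank (g (i + 1)) (g i)) → False := by
  intro m
  induction m using Nat.strong_induction_on with
  | _ m ih =>
  intro g hm hper hAdj hrank
  have hne : ∀ i, g i ≠ g (i + 1) := fun i h => I.G.irrefl (h ▸ hAdj i)
  -- splicing sub-lemma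
  have splice : ∀ c k, 2 ≤ k → k < m → g (c + k) = g c →
      I.rank (g c) (g (c + 1)) < I.rank (g c) (g (c + k - 1)) → False := by
    intro c k hk2 hkm hck hrk
    have hone : (1 : ℕ) % k = 1 := Nat.mod_eq_of_lt (by omega)
    apply ih k hkm (fun i => g (c + i % k)) (by omega)
    · intro i
      simp [Nat.add_mod_right]
    · intro i
      show I.G.Adj (g (c + (i + 1) % k)) (g (c + i % k))
      have hr : i % k < k := Nat.mod_lt _ (by omega)
      have h1 : (i + 1) % k = (i % k + 1) % k := by
        rw [Nat.add_mod, hone]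
      rcases Nat.lt_or_ge (i % k + 1) k with hlt | hge
      · rw [h1, Nat.mod_eq_of_lt hlt]
        have e1 : c + (i % k + 1) = (c + i % k) + 1 := by omega
        rw [e1]
        exact hAdj (c + i % k)
      · have hk : i % k = k - 1 := by omega
        have h2 : (i + 1) % k = 0 := by
          rw [h1, show i % k + 1 = k by omega, Nat.mod_self]
        rw [h2, hk, Nat.add_zero]
        have := hAdj (c + (k - 1))
        rw [show c + (k - 1) + 1 = c + k by omega, hck] at this
        exact this
    · intro i
      show I.rank (g (c + (i + 1) % k)) (g (c + (i + 2) % k)) <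
        I.rank (g (c + (i + 1) % k)) (g (c + i % k))
      have hr : i % k < k := Nat.mod_lt _ (by omega)
      have h1 : (i + 1) % k = (i % k + 1) % k := by
        rw [Nat.add_mod, hone]
      have h2 : (i + 2) % k = ((i % k + 1) % k + 1) % k := by
        rw [show i + 2 = (i + 1) + 1 by ring, Nat.add_mod (i + 1) 1, hone, h1]
      rcases Nat.lt_or_ge (i % k + 2) k with hlt | hge
      · -- interior
        have h1' : (i + 1) % k = i % k + 1 := by
          rw [h1, Nat.mod_eq_of_lt (by omega)]
        have h2' : (i + 2) % k = i % k + 2 := by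
          rw [h2, Nat.mod_eq_of_lt (show i % k + 1 < k by omega),
            Nat.mod_eq_of_lt (show i % k + 1 + 1 < k by omega)]
        rw [h1', h2', show c + (i % k + 1) = (c + i % k) + 1 by omega,
          show c + (i % k + 2) = (c + i % k) + 2 by omega]
        exact hrank (c + i % k)
      · rcases Nat.eq_or_lt_of_le hge with heq | hlt2
        · -- i % k = k - 2
          have h1' : (i + 1) % k = i % k + 1 := by
            rw [h1, Nat.mod_eq_of_lt (by omega)]
          have h2' : (i + 2) % k = 0 := by
            rw [h2, Nat.mod_eq_of_lt (show i % k + 1 < k by omega),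
              show i % k + 1 + 1 = k by omega, Nat.mod_self]
          rw [h1', h2', Nat.add_zero]
          have := hrank (c + i % k)
          rw [show c + i % k + 2 = c + k by omega, hck] at this
          rw [show c + (i % k + 1) = c + i % k + 1 by omega]
          exact this
        · -- i % k = k - 1
          have hk : i % k = k - 1 := by omega
          have h1' : (i + 1) % k = 0 := by
            rw [h1, show i % k + 1 = k by omega, Nat.mod_self]
          have h2' : (i + 2) % k = 1 := by
            rw [h2, show i % k + 1 = k by omega, Nat.mod_self, Nat.zero_add, hone]
          rw [h1', h2', hk, Nat.add_zero, show c + (k - 1) = c + k - 1 by omega]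
          exact hrk
  -- case on injectivity of the window
  by_cases hinj : ∀ a b, a < m → b < m → g a = g b → a = b
  · -- injective: build a preference cycle
    rcases Nat.lt_or_ge m 3 with hm3 | hm3
    · interval_cases m
      · exact hne 0 (hper 0).symm
      · have := hrank 0
        rw [hper 0] at this
        exact lt_irrefl _ this
    · apply hI
      haveI : NeZero m := ⟨by omega⟩
      haveI : Fact (1 < m) := ⟨by omega⟩
      have hmod := periodic_mod g m hper
      refine ⟨m, fun i : ZMod m => g i.val, hm3, ?_, ?_⟩
      · intro i j hij
        have := hinj i.val j.val (ZMod.val_lt i) (ZMod.val_lt j) hij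
        exact ZMod.val_injective m this
      · intro i
        set t := i.val with ht
        set s := (i - 1).val with hs
        have hslt : s < m := ZMod.val_lt _
        have htlt : t < m := ZMod.val_lt _
        have hsv : (s + 1) % m = t := by
          have h := ZMod.val_add (i - 1) 1
          rw [ZMod.val_one] at h
          simp only [sub_add_cancel] at h
          rw [← ht, ← hs] at h
          exact h.symm
        have hsv' : (s + 1 = m ∧ t = 0) ∨ (s + 1 < m ∧ t = s + 1) := by
          rcases Nat.lt_or_ge (s + 1) m with h | h
          · right; exact ⟨h, by rw [← hsv, Nat.mod_eq_of_lt h]⟩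
          · left
            have he : s + 1 = m := by omega
            exact ⟨he, by rw [← hsv, he, Nat.mod_self]⟩
        have hgs : g s = g (t + m - 1) := by
          rcases hsv' with ⟨h1, h2⟩ | ⟨h1, h2⟩
          · rw [show t + m - 1 = s by omega]
          · rw [show t + m - 1 = s + m by omega, hper]
        have hf1 : (fun j : ZMod m => g j.val) (i + 1) = g (t + 1) := by
          have h : (i + 1).val = (t + 1) % m := by
            rw [ZMod.val_add, ZMod.val_one]
          show g (i + 1).val = g (t + 1)
          rw [h, hmod]
        have hfm : (fun j : ZMod m => g j.val) (i - 1) = g (t + m - 1) := by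
          show g s = g (t + m - 1)
          exact hgs
        show I.Prefers (g t) _ _
        rw [hf1, hfm]
        have hA1 : I.G.Adj (g t) (g (t + 1)) := (hAdj t).symm
        have hA2 : I.G.Adj (g t) (g (t + m - 1)) := by
          have := hAdj (t + m - 1)
          rw [show t + m - 1 + 1 = t + m by omega, hper] at this
          exact this
        have hR : I.rank (g t) (g (t + 1)) < I.rank (g t) (g (t + m - 1)) := by
          have := hrank (t + m - 1)
          rw [show t + m - 1 + 1 = t + m by omega, show t + m - 1 + 2 = (t + 1) + m by omega,
            hper, hper] at this
          exact this
        exact ⟨hA1, hA2, hR⟩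
  · -- not injective: splice
    push_neg at hinj
    obtain ⟨a, b, ha, hb, hab, hne'⟩ := hinj
    have key : ∀ a b, a < b → b < m → g a = g b → False := by
      intro a b hlt hbm hab
      rcases Nat.lt_or_ge (b - a) 2 with hd1 | hd2
      · exact hne a (by rw [show a + 1 = b by omega]; exact hab)
      · by_cases h1 : I.rank (g a) (g (a + 1)) < I.rank (g a) (g (a + (b - a) - 1))
        · exact splice a (b - a) hd2 (by omega)
            (by rw [show a + (b - a) = b by omega]; exact hab.symm) h1
        · push_neg at h1
          rcases Nat.lt_or_ge (m - (b - a)) 2 with hk1 | hk2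
          · apply hne b
            rw [show b + 1 = a + m by omega, hper]
            exact hab.symm
          · apply splice b (m - (b - a)) hk2 (by omega)
            · rw [show b + (m - (b - a)) = a + m by omega, hper]
              exact hab
            · have h2 := hrank (b - 1)
              rw [show b - 1 + 1 = b by omega, show b - 1 + 2 = b + 1 by omega] at h2
              rw [← hab, show b - 1 = a + (b - a) - 1 by omega] at h2
              have h3 := hrank (a + m - 1)
              rw [show a + m - 1 + 1 = a + m by omega,
                show a + m - 1 + 2 = (a + 1) + m by omega, hper, hper] at h3
              rw [← hab, show b + (m - (b - a)) - 1 = a + m - 1 by omega]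
              exact lt_of_lt_of_le h2 h1 |>.trans h3
    rcases Nat.lt_trichotomy a b with h | h | h
    · exact key a b h hb hab
    · exact hne' h
    · exact key b a h ha hab.symm


/-- The pivot relation on oriented pairs: `(x, v) → (v, y)` when `v` prefers `y` to `x`. -/
def Rp (u w : P × P) : Prop :=
  u.2 = w.1 ∧ I.G.Adj w.1 u.1 ∧ I.G.Adj w.1 w.2 ∧ I.rank w.1 w.2 < I.rank w.1 u.1


lemma rp_replace {u q : P × P} (h : Relation.TransGen I.Rp u q) {v b c : P}
    (hq : q = (v, b)) (hadj : I.G.Adj v c) (hrk : I.rank v c < I.rank v b) :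
    Relation.TransGen I.Rp u (v, c) := by
  obtain ⟨q', hq', hstep⟩ := Relation.TransGen.tail'_iff.1 h
  subst hq
  obtain ⟨h1, h2, h3, h4⟩ := hstep
  exact Relation.TransGen.tail'_iff.2 ⟨q', hq', ⟨h1, h2, hadj, lt_trans hrk h4⟩⟩

lemma rp_exists_chain {u w : P × P} (h : Relation.TransGen I.Rp u w) :
    ∃ n : ℕ, ∃ g : ℕ → P, 1 ≤ n ∧ u = (g 0, g 1) ∧ w = (g n, g (n + 1)) ∧
      ∀ i < n, I.Rp (g i, g (i + 1)) (g (i + 1), g (i + 2)) := by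
  induction h with
  | single hr =>
    rename_i q
    obtain ⟨u1, u2⟩ := u
    obtain ⟨q1, q2⟩ := q
    obtain ⟨h1, h2, h3, h4⟩ := hr
    simp only at h1 h2 h3 h4
    subst h1
    refine ⟨1, fun i => if i = 0 then u1 else if i = 1 then u2 else q2, le_refl 1,
      by norm_num, by norm_num, ?_⟩
    intro i hi
    obtain rfl : i = 0 := by omega
    norm_num
    exact ⟨rfl, h2, h3, h4⟩
  | tail hT hr ih =>
    rename_i q r
    obtain ⟨n, g, hn, hu, hq, hchain⟩ := ih
    obtain ⟨q1, q2⟩ := q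
    obtain ⟨r1, r2⟩ := r
    obtain ⟨h1, h2, h3, h4⟩ := hr
    simp only at h1 h2 h3 h4
    subst h1
    have hq1 : q1 = g n := congrArg Prod.fst hq
    have hq2 : q2 = g (n + 1) := congrArg Prod.snd hq
    rw [hq1] at h2 h4
    rw [hq2] at h2 h3 h4
    refine ⟨n + 1, fun i => if i = n + 2 then r2 else g i, by omega, ?_, ?_, ?_⟩
    · beta_reduce
      rw [hu, if_neg (show (0:ℕ) ≠ n + 2 by omega), if_neg (show (1:ℕ) ≠ n + 2 by omega)]
    · beta_reduce
      rw [if_neg (show n + 1 ≠ n + 2 by omega), show n + 1 + 1 = n + 2 from rfl, if_pos rfl, ← hq2]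
    · intro i hi
      rcases Nat.lt_or_ge i n with h' | h'
      · beta_reduce
        rw [if_neg (show i ≠ n + 2 by omega), if_neg (show i + 1 ≠ n + 2 by omega),
          if_neg (show i + 2 ≠ n + 2 by omega)]
        exact hchain i h'
      · obtain rfl : i = n := by omega
        beta_reduce
        rw [if_neg (show i ≠ i + 2 by omega), if_neg (show i + 1 ≠ i + 2 by omega), if_pos rfl]
        exact ⟨rfl, h2, h3, h4⟩
lemma rp_irrefl (hI : I.Acyclic) (u : P × P) : ¬ Relation.TransGen I.Rp u u := by
  intro h
  obtain ⟨n, g, hn, hu, hw, hchain⟩ := I.rp_exists_chain h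
  have hweq : (g 0, g 1) = (g n, g (n + 1)) := hu.symm.trans hw
  have hg0 : g n = g 0 := (congrArg Prod.fst hweq).symm
  have hg1 : g (n + 1) = g 1 := (congrArg Prod.snd hweq).symm
  have A : ∀ j < n, I.G.Adj (g (j + 1)) (g j) := fun j hj => (hchain j hj).2.1
  have B : ∀ j < n, I.rank (g (j + 1)) (g (j + 2)) < I.rank (g (j + 1)) (g j) :=
    fun j hj => (hchain j hj).2.2.2
  rcases Nat.lt_or_ge n 2 with hn2 | hn2
  · -- n = 1
    have hn1 : n = 1 := by omega
    subst hn1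
    have hB := B 0 (by omega)
    norm_num at hB
    rw [show (2:ℕ) = 1 + 1 from rfl, hg1, hg0] at hB
    exact lt_irrefl _ hB
  · have hone : (1 : ℕ) % n = 1 := Nat.mod_eq_of_lt (by omega)
    apply I.no_closed_walk hI n (fun i => g (i % n)) (by omega)
    · intro i; simp [Nat.add_mod_right]
    · intro i
      show I.G.Adj (g ((i + 1) % n)) (g (i % n))
      have hr : i % n < n := Nat.mod_lt _ (by omega)
      have h1 : (i + 1) % n = (i % n + 1) % n := by rw [Nat.add_mod, hone]
      rcases Nat.lt_or_ge (i % n + 1) n with hlt | hge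
      · rw [h1, Nat.mod_eq_of_lt hlt]
        exact A (i % n) hr
      · have h2 : (i + 1) % n = 0 := by
          rw [h1, show i % n + 1 = n by omega, Nat.mod_self]
        rw [h2, show i % n = n - 1 by omega, ← hg0]
        have := A (n - 1) (by omega)
        rw [show n - 1 + 1 = n by omega] at this
        exact this
    · intro i
      show I.rank (g ((i + 1) % n)) (g ((i + 2) % n)) < I.rank (g ((i + 1) % n)) (g (i % n))
      have hr : i % n < n := Nat.mod_lt _ (by omega)
      have h1 : (i + 1) % n = (i % n + 1) % n := by rw [Nat.add_mod, hone]
      have h2 : (i + 2) % n = ((i % n + 1) % n + 1) % n := by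
        rw [show i + 2 = (i + 1) + 1 by ring, Nat.add_mod (i + 1) 1, hone, h1]
      rcases Nat.lt_or_ge (i % n + 2) n with hlt | hge
      · have h1' : (i + 1) % n = i % n + 1 := by rw [h1, Nat.mod_eq_of_lt (by omega)]
        have h2' : (i + 2) % n = i % n + 2 := by
          rw [h2, Nat.mod_eq_of_lt (show i % n + 1 < n by omega),
            Nat.mod_eq_of_lt (show i % n + 1 + 1 < n by omega)]
        rw [h1', h2']
        exact B (i % n) hr
      · rcases Nat.eq_or_lt_of_le hge with heq | hlt2
        · have h1' : (i + 1) % n = i % n + 1 := by rw [h1, Nat.mod_eq_of_lt (by omega)]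
          have h2' : (i + 2) % n = 0 := by
            rw [h2, Nat.mod_eq_of_lt (show i % n + 1 < n by omega),
              show i % n + 1 + 1 = n by omega, Nat.mod_self]
          rw [h1', h2', ← hg0]
          have := B (i % n) hr
          rw [show i % n + 2 = n by omega] at this
          exact this
        · have hk : i % n = n - 1 := by omega
          have h1' : (i + 1) % n = 0 := by
            rw [h1, show i % n + 1 = n by omega, Nat.mod_self]
          have h2' : (i + 2) % n = 1 := by
            rw [h2, show i % n + 1 = n by omega, Nat.mod_self, Nat.zero_add, hone]
          rw [h1', h2', hk, ← hg0, ← hg1]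
          have := B (n - 1) (by omega)
          rw [show n - 1 + 1 = n by omega, show n - 1 + 2 = n + 1 by omega] at this
          exact this


/-! ### The edge relation and potential -/

def Re (d e : Sym2 P) : Prop :=
  ∃ v x y : P, d = s(v, x) ∧ e = s(v, y) ∧ I.G.Adj v x ∧ I.G.Adj v y ∧
    I.rank v y < I.rank v x

lemma re_lift {d e : Sym2 P} (h : Relation.TransGen I.Re d e) :
    ∃ u w : P × P, s(u.1, u.2) = d ∧ s(w.1, w.2) = e ∧ Relation.TransGen I.Rp u w := by
  induction h with
  | single hr =>
    obtain ⟨v, x, y, hd, he, a1, a2, hr⟩ := hr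
    exact ⟨(x, v), (v, y), by rw [hd]; exact Sym2.eq_swap, he.symm,
      Relation.TransGen.single ⟨rfl, a1, a2, hr⟩⟩
  | tail hT hr ih =>
    obtain ⟨u, w, hu, hw, hTG⟩ := ih
    obtain ⟨v, x, y, he, hf, a1, a2, hr⟩ := hr
    have hwe : s(w.1, w.2) = s(v, x) := hw.trans he
    rw [Sym2.eq_iff] at hwe
    rcases hwe with ⟨h1, h2⟩ | ⟨h1, h2⟩
    · have hw' : w = (v, x) := Prod.ext h1 h2
      exact ⟨u, (v, y), hu, hf.symm, I.rp_replace hTG hw' a2 hr⟩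
    · have hw' : w = (x, v) := Prod.ext h1 h2
      refine ⟨u, (v, y), hu, hf.symm, Relation.TransGen.tail hTG ?_⟩
      rw [hw']
      exact ⟨rfl, a1, a2, hr⟩

lemma re_irrefl (hI : I.Acyclic) (e : Sym2 P) : ¬ Relation.TransGen I.Re e e := by
  intro h
  obtain ⟨u, w, hu, hw, hTG⟩ := I.re_lift h
  have heq : s(u.1, u.2) = s(w.1, w.2) := hu.trans hw.symm
  rw [Sym2.eq_iff] at heq
  rcases heq with ⟨h1, h2⟩ | ⟨h1, h2⟩
  · have : u = w := Prod.ext h1 h2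
    exact I.rp_irrefl hI u (this ▸ hTG)
  · have hw' : w = (u.2, u.1) := Prod.ext h2.symm h1.symm
    rw [hw'] at hTG
    obtain ⟨c, hc, hRT⟩ := Relation.TransGen.head'_iff.1 hTG
    obtain ⟨e1, e2, e3, e4⟩ := hc
    rw [← e1] at e3 e4
    rcases Relation.reflTransGen_iff_eq_or_transGen.1 hRT with hceq | hTG2
    · rw [← hceq] at e4
      exact lt_irrefl _ e4
    · have hrep := I.rp_replace hTG2 rfl e3 e4
      have hcb : (u.2, c.2) = c := Prod.ext e1 rfl
      rw [hcb] at hrep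
      exact I.rp_irrefl hI c hrep

open scoped Classical in
noncomputable def eidx (e : Sym2 P) : ℕ :=
  (Finset.univ.filter fun d => Relation.TransGen I.Re d e).card

noncomputable def phi (e : Sym2 P) : ℕ := 3 ^ I.eidx e

lemma phi_pos (e : Sym2 P) : 1 ≤ I.phi e := Nat.one_le_pow _ _ (by norm_num)

open scoped Classical in
lemma phi_step (hI : I.Acyclic) {d e : Sym2 P} (h : I.Re d e) : 3 * I.phi d ≤ I.phi e := by
  have hidx : I.eidx d < I.eidx e := by
    apply Finset.card_lt_card
    constructor
    · intro x hx
      rw [Finset.mem_filter] at hx ⊢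
      exact ⟨Finset.mem_univ _, Relation.TransGen.tail hx.2 h⟩
    · intro hsub
      have hd : d ∈ Finset.univ.filter fun d' => Relation.TransGen I.Re d' e :=
        Finset.mem_filter.2 ⟨Finset.mem_univ _, Relation.TransGen.single h⟩
      have := hsub hd
      rw [Finset.mem_filter] at this
      exact I.re_irrefl hI d this.2
  calc 3 * I.phi d = 3 ^ (I.eidx d + 1) := by rw [phi, pow_succ]; ring
    _ ≤ 3 ^ I.eidx e := Nat.pow_le_pow_right (by norm_num) hidx
    _ = I.phi e := rfl

/-! ### Basic configuration lemmas -/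

lemma mem_mates {C : Finset (Sym2 P)} {p q : P} : q ∈ mates C p ↔ s(p, q) ∈ C := by
  simp [mates]

lemma adj_of_mem_mates {C : Finset (Sym2 P)} (hC : I.IsConfig C) {p q : P}
    (h : q ∈ mates C p) : I.G.Adj p q := by
  have := hC.1 _ (mem_mates.1 h)
  rwa [SimpleGraph.mem_edgeSet] at this

lemma dropEdges_empty {C : Finset (Sym2 P)} {p : P} (h : I.UnderMated C p) :
    I.dropEdges C p = ∅ := if_pos h

lemma dropEdges_subset {C : Finset (Sym2 P)} (p : P) : I.dropEdges C p ⊆ C := by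
  intro e he
  rw [dropEdges] at he
  split_ifs at he
  · exact absurd he (Finset.notMem_empty _)
  · obtain ⟨w, hw, rfl⟩ := Finset.mem_image.1 he
    exact mem_mates.1 (Finset.mem_filter.1 hw).1

lemma dropEdges_spec {C : Finset (Sym2 P)} (hC : I.IsConfig C) {p q : P}
    (hfull : ¬ I.UnderMated C p) (hw : I.Willing C p q) :
    ∃ w ∈ mates C p, I.dropEdges C p = {s(p, w)} ∧ I.rank p q < I.rank p w ∧
      ∀ r ∈ mates C p, I.rank p r ≤ I.rank p w := by
  obtain ⟨w0, hw0, hr0⟩ := hw.resolve_left hfull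
  obtain ⟨w, hwm, hmax⟩ := Finset.exists_max_image (mates C p) (I.rank p) ⟨w0, hw0⟩
  refine ⟨w, hwm, ?_, lt_of_lt_of_le hr0 (hmax _ hw0), hmax⟩
  have hfull' : ¬ (mates C p).card < I.b p := hfull
  rw [dropEdges, if_neg hfull']
  have hfilter : ((mates C p).filter fun w' => ∀ r ∈ mates C p, I.rank p r ≤ I.rank p w')
      = {w} := by
    ext r
    simp only [Finset.mem_filter, Finset.mem_singleton]
    constructor
    · rintro ⟨hr, hmax'⟩
      exact I.rank_injOn p (I.adj_of_mem_mates hC hr) (I.adj_of_mem_mates hC hwm)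
        (le_antisymm (hmax r hr) (hmax' w hwm))
    · rintro rfl; exact ⟨hwm, hmax⟩
  rw [hfilter, Finset.image_singleton]

lemma blockingPair_symm {C : Finset (Sym2 P)} {p q : P} (h : I.BlockingPair C p q) :
    I.BlockingPair C q p := by
  obtain ⟨h1, h2, h3, h4⟩ := h
  exact ⟨h1.symm, by rwa [Sym2.eq_swap], h4, h3⟩

lemma resolve_comm (C : Finset (Sym2 P)) (p q : P) : I.resolve C p q = I.resolve C q p := by
  rw [resolve, resolve, Sym2.eq_swap, Finset.union_comm]

lemma mates_resolve_subset_of_ne {C : Finset (Sym2 P)} {p q r : P} (hrp : r ≠ p)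
    (hrq : r ≠ q) : mates (I.resolve C p q) r ⊆ mates C r := by
  intro x hx
  rw [mem_mates] at hx ⊢
  rcases Finset.mem_insert.1 hx with h | h
  · exfalso
    rcases Sym2.eq_iff.1 h with ⟨h1, _⟩ | ⟨h1, _⟩
    · exact hrp h1
    · exact hrq h1
  · exact (Finset.mem_sdiff.1 h).1

lemma card_mates_resolve_p {C : Finset (Sym2 P)} (hC : I.IsConfig C) {p q : P}
    (hB : I.BlockingPair C p q) : (mates (I.resolve C p q) p).card ≤ I.b p := by
  by_cases hfull : I.UnderMated C p
  · have hsub : mates (I.resolve C p q) p ⊆ insert q (mates C p) := by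
      intro x hx
      rw [mem_mates] at hx
      rcases Finset.mem_insert.1 hx with h | h
      · rcases Sym2.eq_iff.1 h with ⟨_, h2⟩ | ⟨h1, h2⟩
        · exact Finset.mem_insert.2 (Or.inl h2)
        · exact Finset.mem_insert.2 (Or.inl (h2.trans h1))
      · exact Finset.mem_insert_of_mem (mem_mates.2 (Finset.mem_sdiff.1 h).1)
    have h1 := Finset.card_le_card hsub
    have h2 := Finset.card_insert_le q (mates C p)
    have h3 : (mates C p).card < I.b p := hfull
    omega
  · obtain ⟨w, hwm, hDrop, hrk, hmax⟩ := I.dropEdges_spec hC hfull hB.2.2.1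
    have hsub : mates (I.resolve C p q) p ⊆ insert q ((mates C p).erase w) := by
      intro x hx
      rw [mem_mates] at hx
      rcases Finset.mem_insert.1 hx with h | h
      · rcases Sym2.eq_iff.1 h with ⟨_, h2⟩ | ⟨h1, h2⟩
        · exact Finset.mem_insert.2 (Or.inl h2)
        · exact Finset.mem_insert.2 (Or.inl (h2.trans h1))
      · obtain ⟨h1, h2⟩ := Finset.mem_sdiff.1 h
        apply Finset.mem_insert_of_mem
        rw [Finset.mem_erase]
        refine ⟨?_, mem_mates.2 h1⟩
        intro hxw
        apply h2
        apply Finset.mem_union_left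
        rw [hDrop, hxw]
        exact Finset.mem_singleton_self _
    have h1 := Finset.card_le_card hsub
    have h2 := Finset.card_insert_le q ((mates C p).erase w)
    have h3 : ((mates C p).erase w).card = (mates C p).card - 1 :=
      Finset.card_erase_of_mem hwm
    have h4 : 1 ≤ (mates C p).card := Finset.card_pos.2 ⟨w, hwm⟩
    have h5 : ¬ (mates C p).card < I.b p := hfull
    have h6 := hC.2 p
    omega

lemma resolve_isConfig {C : Finset (Sym2 P)} (hC : I.IsConfig C) {p q : P}
    (hB : I.BlockingPair C p q) : I.IsConfig (I.resolve C p q) := by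
  constructor
  · intro e he
    rcases Finset.mem_insert.1 he with rfl | h
    · rw [SimpleGraph.mem_edgeSet]; exact hB.1
    · exact hC.1 _ (Finset.mem_sdiff.1 h).1
  · intro r
    by_cases hrp : r = p
    · subst hrp; exact I.card_mates_resolve_p hC hB
    · by_cases hrq : r = q
      · subst hrq
        rw [I.resolve_comm]
        exact I.card_mates_resolve_p hC (I.blockingPair_symm hB)
      · exact le_trans (Finset.card_le_card (I.mates_resolve_subset_of_ne hrp hrq)) (hC.2 r)

lemma phi_resolve_lt (hI : I.Acyclic) {C : Finset (Sym2 P)} (hC : I.IsConfig C) {p q : P}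
    (hB : I.BlockingPair C p q) :
    ∑ e ∈ C, I.phi e < ∑ e ∈ I.resolve C p q, I.phi e := by
  set D := I.dropEdges C p ∪ I.dropEdges C q with hD
  have hDC : D ⊆ C := Finset.union_subset (I.dropEdges_subset p) (I.dropEdges_subset q)
  have he0 : s(p, q) ∉ C \ D := fun h => hB.2.1 (Finset.mem_sdiff.1 h).1
  have hsplit : ∑ e ∈ C \ D, I.phi e + ∑ e ∈ D, I.phi e = ∑ e ∈ C, I.phi e :=
    Finset.sum_sdiff hDC
  have hres : ∑ e ∈ I.resolve C p q, I.phi e = I.phi s(p, q) + ∑ e ∈ C \ D, I.phi e :=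
    Finset.sum_insert he0
  have hp : I.dropEdges C p = ∅ ∨
      ∃ d, I.dropEdges C p = {d} ∧ 3 * I.phi d ≤ I.phi s(p, q) := by
    by_cases hfull : I.UnderMated C p
    · exact Or.inl (I.dropEdges_empty hfull)
    · obtain ⟨w, hwm, hDrop, hrk, _⟩ := I.dropEdges_spec hC hfull hB.2.2.1
      refine Or.inr ⟨s(p, w), hDrop, I.phi_step hI ?_⟩
      exact ⟨p, w, q, rfl, rfl, I.adj_of_mem_mates hC hwm, hB.1, hrk⟩
  have hq : I.dropEdges C q = ∅ ∨
      ∃ d, I.dropEdges C q = {d} ∧ 3 * I.phi d ≤ I.phi s(p, q) := by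
    by_cases hfull : I.UnderMated C q
    · exact Or.inl (I.dropEdges_empty hfull)
    · obtain ⟨w, hwm, hDrop, hrk, _⟩ := I.dropEdges_spec hC hfull hB.2.2.2
      refine Or.inr ⟨s(q, w), hDrop, I.phi_step hI ?_⟩
      exact ⟨q, w, p, rfl, Sym2.eq_swap, I.adj_of_mem_mates hC hwm, hB.1.symm, hrk⟩
  have hkey : ∑ e ∈ D, I.phi e < I.phi s(p, q) := by
    have hpos := I.phi_pos s(p, q)
    rcases hp with hp0 | ⟨d1, hd1, hle1⟩ <;> rcases hq with hq0 | ⟨d2, hd2, hle2⟩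
    · rw [hD, hp0, hq0]
      simp only [Finset.empty_union, Finset.sum_empty]
      omega
    · rw [hD, hp0, hd2, Finset.empty_union, Finset.sum_singleton]
      have := I.phi_pos d2
      omega
    · rw [hD, hq0, hd1, Finset.union_empty, Finset.sum_singleton]
      have := I.phi_pos d1
      omega
    · rw [hD, hd1, hd2]
      by_cases hdd : d1 = d2
      · subst hdd
        rw [Finset.union_self, Finset.sum_singleton]
        have := I.phi_pos d1
        omega
      · rw [← Finset.insert_eq, Finset.sum_insert (by simpa using hdd),
          Finset.sum_singleton]
        have := I.phi_pos d1
        have := I.phi_pos d2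
        omega
  omega


/-! ### Uniqueness of the stable configuration -/

lemma walk_step {C D : Finset (Sym2 P)} (hC : I.IsStable C) (hD : I.IsStable D) {x y : P}
    (hxy : s(x, y) ∈ C) (hxyD : s(x, y) ∉ D) (hunw : ¬ I.Willing D y x) :
    ∃ z : P, s(y, z) ∈ D ∧ s(y, z) ∉ C ∧ ¬ I.Willing C z y ∧ I.Rp (x, y) (y, z) := by
  have hAdjxy : I.G.Adj x y := by
    have := hC.1.1 _ hxy
    rwa [SimpleGraph.mem_edgeSet] at this
  have h1 : ¬ I.UnderMated D y := fun h => hunw (Or.inl h)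
  have h2 : ∀ w ∈ mates D y, I.rank y w ≤ I.rank y x := by
    intro w hw
    by_contra hlt
    exact hunw (Or.inr ⟨w, hw, not_le.1 hlt⟩)
  have hxnot : x ∉ mates D y := by
    rw [mem_mates]
    intro h
    apply hxyD
    rwa [Sym2.eq_swap] at h
  have h2' : ∀ w ∈ mates D y, I.rank y w < I.rank y x := by
    intro w hw
    rcases lt_or_eq_of_le (h2 w hw) with h | h
    · exact h
    · exact absurd hw (fun hw' => hxnot
        ((I.rank_injOn y (I.adj_of_mem_mates hD.1 hw) hAdjxy.symm h) ▸ hw'))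
  have hns : ¬ mates D y ⊆ mates C y := by
    intro hsub
    have hxC : x ∈ mates C y := by
      rw [mem_mates, Sym2.eq_swap]
      exact hxy
    have hins : insert x (mates D y) ⊆ mates C y := Finset.insert_subset hxC hsub
    have hcard := Finset.card_le_card hins
    rw [Finset.card_insert_of_notMem hxnot] at hcard
    have hDfull : ¬ (mates D y).card < I.b y := h1
    have := hD.1.2 y
    have := hC.1.2 y
    omega
  obtain ⟨z, hzD, hzC⟩ := Finset.not_subset.1 hns
  have hAdjyz : I.G.Adj y z := I.adj_of_mem_mates hD.1 hzD
  have hzCnot : s(y, z) ∉ C := fun h => hzC (mem_mates.2 h)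
  refine ⟨z, mem_mates.1 hzD, hzCnot, ?_, rfl, hAdjxy.symm, hAdjyz, h2' z hzD⟩
  intro hwill
  apply hC.2 y z
  refine ⟨hAdjyz, hzCnot, Or.inr ⟨x, ?_, h2' z hzD⟩, hwill⟩
  rw [mem_mates, Sym2.eq_swap]
  exact hxy

def WalkInv (C D : Finset (Sym2 P)) (u : P × P) : Prop :=
  (s(u.1, u.2) ∈ C ∧ s(u.1, u.2) ∉ D ∧ ¬ I.Willing D u.2 u.1) ∨
  (s(u.1, u.2) ∈ D ∧ s(u.1, u.2) ∉ C ∧ ¬ I.Willing C u.2 u.1)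

lemma walkInv_step {C D : Finset (Sym2 P)} (hC : I.IsStable C) (hD : I.IsStable D)
    (u : P × P) (h : I.WalkInv C D u) : ∃ u', I.Rp u u' ∧ I.WalkInv C D u' := by
  rcases h with ⟨h1, h2, h3⟩ | ⟨h1, h2, h3⟩
  · obtain ⟨z, hz1, hz2, hz3, hz4⟩ := I.walk_step hC hD h1 h2 h3
    exact ⟨(u.2, z), hz4, Or.inr ⟨hz1, hz2, hz3⟩⟩
  · obtain ⟨z, hz1, hz2, hz3, hz4⟩ := I.walk_step hD hC h1 h2 h3
    exact ⟨(u.2, z), hz4, Or.inl ⟨hz1, hz2, hz3⟩⟩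

lemma stable_unique (hI : I.Acyclic) {C D : Finset (Sym2 P)} (hC : I.IsStable C)
    (hD : I.IsStable D) : C = D := by
  by_contra hne
  -- find an initial pair satisfying the invariant
  have hinit : ∃ u : P × P, I.WalkInv C D u := by
    have : ∃ e, (e ∈ C ∧ e ∉ D) ∨ (e ∈ D ∧ e ∉ C) := by
      by_contra hall
      push_neg at hall
      apply hne
      ext e
      exact ⟨(hall e).1, (hall e).2⟩
    obtain ⟨e, he⟩ := this
    induction e using Sym2.ind with
    | _ x y =>
      rcases he with ⟨h1, h2⟩ | ⟨h1, h2⟩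
      · have hAdj : I.G.Adj x y := by
          have := hC.1.1 _ h1
          rwa [SimpleGraph.mem_edgeSet] at this
        have hnb := hD.2 x y
        rw [BlockingPair] at hnb
        push_neg at hnb
        have h3 := hnb hAdj h2
        by_cases hw : I.Willing D x y
        · exact ⟨(x, y), Or.inl ⟨h1, h2, h3 hw⟩⟩
        · refine ⟨(y, x), Or.inl ⟨by rwa [Sym2.eq_swap], by rwa [Sym2.eq_swap], hw⟩⟩
      · have hAdj : I.G.Adj x y := by
          have := hD.1.1 _ h1
          rwa [SimpleGraph.mem_edgeSet] at this
        have hnb := hC.2 x y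
        rw [BlockingPair] at hnb
        push_neg at hnb
        have h3 := hnb hAdj h2
        by_cases hw : I.Willing C x y
        · exact ⟨(x, y), Or.inr ⟨h1, h2, h3 hw⟩⟩
        · refine ⟨(y, x), Or.inr ⟨by rwa [Sym2.eq_swap], by rwa [Sym2.eq_swap], hw⟩⟩
  obtain ⟨u0, h0⟩ := hinit
  -- build an infinite Rp-walk
  let T := {u : P × P // I.WalkInv C D u}
  let step : T → T := fun t =>
    ⟨(I.walkInv_step hC hD t.1 t.2).choose, (I.walkInv_step hC hD t.1 t.2).choose_spec.2⟩
  let seq : ℕ → T := fun n => Nat.rec ⟨u0, h0⟩ (fun _ t => step t) n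
  have hchain : ∀ n, I.Rp (seq n).1 (seq (n + 1)).1 := by
    intro n
    exact (I.walkInv_step hC hD (seq n).1 (seq n).2).choose_spec.1
  have htrans : ∀ i j, i < j → Relation.TransGen I.Rp (seq i).1 (seq j).1 := by
    intro i j hij
    induction j with
    | zero => omega
    | succ j ih =>
      rcases Nat.lt_or_ge i j with h | h
      · exact Relation.TransGen.tail (ih h) (hchain j)
      · have : i = j := by omega
        subst this
        exact Relation.TransGen.single (hchain i)
  obtain ⟨i, j, hij, heq⟩ := Finite.exists_ne_map_eq_of_infinite (fun n => (seq n).1)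
  rcases Nat.lt_trichotomy i j with h | h | h
  · exact I.rp_irrefl hI _ (heq ▸ htrans i j h)
  · exact hij h
  · exact I.rp_irrefl hI _ (heq ▸ htrans j i h)


end PrefInstance

/-- In an acyclic instance, starting from any configuration,
every maximal sequence of active initiatives (one ending at a configuration that
admits no blocking pair) is finite and terminates at the unique stable
configuration of the instance. -/
theorem acyclic_maximal_sequence_terminates (I : PrefInstance P) (hI : I.Acyclic) :
    (∀ f : ℕ → Finset (Sym2 P), I.IsConfig (f 0) →
        ¬ ∀ i : ℕ, I.ActiveStep (f i) (f (i + 1))) ∧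
    ∀ (k : ℕ) (f : ℕ → Finset (Sym2 P)), I.IsConfig (f 0) →
      (∀ i < k, I.ActiveStep (f i) (f (i + 1))) →
      (∀ p q : P, ¬ I.BlockingPair (f k) p q) →
      I.IsStable (f k) ∧ ∀ D : Finset (Sym2 P), I.IsStable D → D = f k := by
  constructor
  · -- no infinite sequence of active initiatives
    intro f hf0 hstep
    have hcfg : ∀ i, I.IsConfig (f i) := by
      intro i
      induction i with
      | zero => exact hf0
      | succ i ih =>
        obtain ⟨p, q, hB, heq⟩ := hstep i
        rw [heq]
        exact I.resolve_isConfig ih hB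
    have hmono : ∀ i, ∑ e ∈ f i, I.phi e < ∑ e ∈ f (i + 1), I.phi e := by
      intro i
      obtain ⟨p, q, hB, heq⟩ := hstep i
      rw [heq]
      exact I.phi_resolve_lt hI (hcfg i) hB
    have hgrow : ∀ i, i ≤ ∑ e ∈ f i, I.phi e := by
      intro i
      induction i with
      | zero => exact Nat.zero_le _
      | succ i ih =>
        have := hmono i
        omega
    have h1 := hgrow (∑ e ∈ (Finset.univ : Finset (Sym2 P)), I.phi e + 1)
    have h2 : ∑ e ∈ f (∑ e ∈ (Finset.univ : Finset (Sym2 P)), I.phi e + 1), I.phi e ≤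
        ∑ e ∈ (Finset.univ : Finset (Sym2 P)), I.phi e :=
      Finset.sum_le_sum_of_subset (Finset.subset_univ _)
    omega
  · -- a maximal finite sequence ends at the unique stable configuration
    intro k f hf0 hsteps hnb
    have hcfg : ∀ i, i ≤ k → I.IsConfig (f i) := by
      intro i
      induction i with
      | zero => exact fun _ => hf0
      | succ i ih =>
        intro hik
        obtain ⟨p, q, hB, heq⟩ := hsteps i (by omega)
        rw [heq]
        exact I.resolve_isConfig (ih (by omega)) hB
    have hstab : I.IsStable (f k) := ⟨hcfg k le_rfl, hnb⟩
    exact ⟨hstab, fun D hD => I.stable_unique hI hD hstab⟩
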